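/- Let s, L be positive integers and let T_L(θ) = ∑_{j=-L}^{L} a_j(θ) e(jθ), where each a_j(θ) is a random trigonometric polynomial of degree at most s, sup_θ |a_j(θ)| ≤ 1 almost surely, for each fixed θ the a_j(θ) are independent with E a_j(θ) = 0. Then for every A > 1 there is C = C(A) such that P[ ‖T_L‖_∞ > C·√(log(s+L))·√L ] ≤ (s+L)^{-A}. -/

import Mathlib

open MeasureTheory ProbabilityTheory Real

lemma SZ_exp_form (k : ℤ) (θ : ℝ) :
    Complex.exp (2 * π * Complex.I * k * θ) = Complex.exp (((2 * π * k * θ : ℝ) : ℂ) * Complex.I) := by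
  congr 1; push_cast; ring

-- L2: norm one

lemma SZ_norm_exp (r : ℝ) : ‖Complex.exp ((r : ℂ) * Complex.I)‖ = 1 := by
  rw [Complex.norm_exp_ofReal_mul_I]

-- L3: Lipschitz

lemma SZ_exp_lip (x y : ℝ) :
    ‖Complex.exp ((x : ℂ) * Complex.I) - Complex.exp ((y : ℂ) * Complex.I)‖ ≤ 2 * |x - y| := by
  have h1 : Complex.exp ((x : ℂ) * Complex.I) - Complex.exp ((y : ℂ) * Complex.I)
      = Complex.exp ((y : ℂ) * Complex.I) * (Complex.exp (((x - y : ℝ) : ℂ) * Complex.I) - 1) := by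
    rw [mul_sub, ← Complex.exp_add, mul_one]
    congr 2
    push_cast; ring
  rw [h1, norm_mul, SZ_norm_exp, one_mul]
  have habs : ‖((x - y : ℝ) : ℂ) * Complex.I‖ = |x - y| := by
    rw [norm_mul, Complex.norm_I, mul_one, Complex.norm_real, Real.norm_eq_abs]
  by_cases h : |x - y| ≤ 1
  · have := Complex.norm_exp_sub_one_le (x := ((x - y : ℝ) : ℂ) * Complex.I) (by rw [habs]; exact h)
    rwa [habs] at this
  · push_neg at h
    calc ‖Complex.exp (((x - y : ℝ) : ℂ) * Complex.I) - 1‖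
        ≤ ‖Complex.exp (((x - y : ℝ) : ℂ) * Complex.I)‖ + ‖(1:ℂ)‖ := norm_sub_le _ _
      _ = 2 := by rw [SZ_norm_exp]; norm_num
      _ ≤ 2 * |x - y| := by nlinarith

lemma SZ_exp_per (m : ℤ) (x : ℝ) (n : ℤ) :
    Complex.exp (2 * π * Complex.I * m * ((x + n : ℝ) : ℂ)) = Complex.exp (2 * π * Complex.I * m * x) := by
  have : (2 : ℂ) * π * Complex.I * m * ((x + n : ℝ) : ℂ)
      = 2 * π * Complex.I * m * x + (m * n : ℤ) * (2 * π * Complex.I) := by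
    push_cast; ring
  rw [this, Complex.exp_add, Complex.exp_int_mul_two_pi_mul_I, mul_one]

-- unit integral

lemma SZ_unit_integral (n : ℤ) :
    ∫ θ in (0:ℝ)..1, Complex.exp (2 * π * Complex.I * n * θ) = if n = 0 then 1 else 0 := by
  by_cases hn : n = 0
  · simp [hn]
  · rw [if_neg hn]
    have hc : (2 * π * Complex.I * n : ℂ) ≠ 0 := by
      apply mul_ne_zero
      apply mul_ne_zero
      apply mul_ne_zero
      · norm_num
      · exact Complex.ofReal_ne_zero.mpr pi_ne_zero
      · exact Complex.I_ne_zero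
      · exact_mod_cast (Int.cast_ne_zero (α := ℂ)).mpr hn
    have := integral_exp_mul_complex (a := 0) (b := 1) hc
    rw [this]
    have h1 : Complex.exp (2 * π * Complex.I * n * (1:ℝ)) = 1 := by
      have : (2 * π * Complex.I * n * ((1:ℝ):ℂ) : ℂ) = (n : ℂ) * (2 * π * Complex.I) := by
        push_cast; ring
      rw [this, Complex.exp_int_mul_two_pi_mul_I]
    have h0 : Complex.exp (2 * π * Complex.I * n * ((0:ℝ):ℂ)) = 1 := by
      norm_num
    rw [h1, h0]
    simp

lemma SZ_coeff_bound (s : ℕ) (g : ℝ → ℂ) (c : ℤ → ℂ)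
    (hg : ∀ θ : ℝ, g θ = ∑ k ∈ Finset.Icc (-(s:ℤ)) s, c k * Complex.exp (2 * π * Complex.I * k * θ))
    (hb : ∀ θ, ‖g θ‖ ≤ 1) :
    ∀ k ∈ Finset.Icc (-(s:ℤ)) s, ‖c k‖ ≤ 1 := by
  intro k hk
  have hfun : (fun θ : ℝ => g θ * Complex.exp (2 * π * Complex.I * (-k) * θ))
      = fun θ : ℝ => ∑ m ∈ Finset.Icc (-(s:ℤ)) s, c m * Complex.exp (2 * π * Complex.I * (m - k) * θ) := by
    funext θ
    rw [hg θ, Finset.sum_mul]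
    refine Finset.sum_congr rfl (fun m _ => ?_)
    rw [mul_assoc, ← Complex.exp_add]
    congr 2
    push_cast; ring
  have hcont : ∀ m : ℤ, Continuous (fun θ : ℝ => c m * Complex.exp (2 * π * Complex.I * (m - k) * θ)) := by
    intro m
    exact continuous_const.mul (Complex.continuous_exp.comp (continuous_const.mul Complex.continuous_ofReal))
  have key : c k = ∫ θ in (0:ℝ)..1, g θ * Complex.exp (2 * π * Complex.I * (-k) * θ) := by
    rw [hfun]
    rw [intervalIntegral.integral_finset_sum (fun m _ => ((hcont m).intervalIntegrable _ _))]
    have : ∀ m ∈ Finset.Icc (-(s:ℤ)) s,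
        (∫ θ in (0:ℝ)..1, c m * Complex.exp (2 * π * Complex.I * (m - k) * θ))
          = if m = k then c m else 0 := by
      intro m _
      rw [intervalIntegral.integral_const_mul]
      have hcast : ∀ θ : ℝ, (2 * π * Complex.I * ((m:ℂ) - k) * θ : ℂ) = 2 * π * Complex.I * ((m - k : ℤ) : ℂ) * θ := by
        intro θ; push_cast; ring
      simp_rw [hcast]
      rw [SZ_unit_integral (m - k)]
      by_cases h : m = k <;> simp [h, sub_eq_zero]
    rw [Finset.sum_congr rfl this, Finset.sum_ite_eq' (Finset.Icc (-(s:ℤ)) s) k c, if_pos hk]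
  rw [key]
  have := intervalIntegral.norm_integral_le_of_norm_le_const (C := 1)
    (f := fun θ : ℝ => g θ * Complex.exp (2 * π * Complex.I * (-k) * θ)) (a := 0) (b := 1) ?_
  · simpa using this
  · intro x hx
    rw [norm_mul]
    have h1 : ‖Complex.exp (2 * π * Complex.I * (-k) * (x:ℂ))‖ = 1 := by
      have : (2 * π * Complex.I * (-k) * (x:ℂ) : ℂ) = ((2 * π * (-k) * x : ℝ) : ℂ) * Complex.I := by
        push_cast; ring
      rw [this, Complex.norm_exp_ofReal_mul_I]
    rw [h1, mul_one]
    exact hb x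

lemma SZ_card_Icc (s : ℕ) : (Finset.Icc (-(s:ℤ)) s).card = 2 * s + 1 := by
  rw [Int.card_Icc]; omega

lemma SZ_T_per (s L : ℕ) (f : ℤ → ℝ → ℂ) (c : ℤ → ℤ → ℂ)
    (hf : ∀ j (θ : ℝ), f j θ = ∑ k ∈ Finset.Icc (-(s:ℤ)) s, c j k * Complex.exp (2 * π * Complex.I * k * θ))
    (θ : ℝ) :
    (∑ j ∈ Finset.Icc (-(L:ℤ)) L, f j θ * Complex.exp (2 * π * Complex.I * j * θ)) =
    (∑ j ∈ Finset.Icc (-(L:ℤ)) L, f j (Int.fract θ) * Complex.exp (2 * π * Complex.I * j * (Int.fract θ))) := by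
  refine Finset.sum_congr rfl (fun j _ => ?_)
  have hθ : θ = Int.fract θ + (⌊θ⌋ : ℤ) := (Int.fract_add_floor θ).symm
  have h1 : f j θ = f j (Int.fract θ) := by
    rw [hf, hf]
    refine Finset.sum_congr rfl (fun k _ => ?_)
    congr 1
    conv_lhs => rw [hθ]
    exact SZ_exp_per k (Int.fract θ) ⌊θ⌋
  have h2 : Complex.exp (2 * π * Complex.I * j * θ) = Complex.exp (2 * π * Complex.I * j * (Int.fract θ)) := by
    conv_lhs => rw [hθ]
    exact SZ_exp_per j (Int.fract θ) ⌊θ⌋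
  rw [h1, h2]

lemma SZ_T_lip (s L : ℕ) (f : ℤ → ℝ → ℂ) (c : ℤ → ℤ → ℂ)
    (hf : ∀ j (θ : ℝ), f j θ = ∑ k ∈ Finset.Icc (-(s:ℤ)) s, c j k * Complex.exp (2 * π * Complex.I * k * θ))
    (hc : ∀ j, ∀ k ∈ Finset.Icc (-(s:ℤ)) s, ‖c j k‖ ≤ 1)
    (θ₁ θ₂ : ℝ) :
    ‖(∑ j ∈ Finset.Icc (-(L:ℤ)) L, f j θ₁ * Complex.exp (2 * π * Complex.I * j * θ₁)) -
     (∑ j ∈ Finset.Icc (-(L:ℤ)) L, f j θ₂ * Complex.exp (2 * π * Complex.I * j * θ₂))‖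
      ≤ (2 * L + 1) * ((2 * s + 1) * (4 * π * (s + L))) * |θ₁ - θ₂| := by
  have hterm : ∀ (j : ℤ) (θ : ℝ), f j θ * Complex.exp (2 * π * Complex.I * j * θ)
      = ∑ k ∈ Finset.Icc (-(s:ℤ)) s, c j k * Complex.exp (2 * π * Complex.I * ((k + j : ℤ) : ℂ) * θ) := by
    intro j θ
    rw [hf, Finset.sum_mul]
    refine Finset.sum_congr rfl (fun k _ => ?_)
    rw [mul_assoc, ← Complex.exp_add]
    congr 2
    push_cast; ring
  rw [← Finset.sum_sub_distrib]
  refine (norm_sum_le _ _).trans ?_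
  have hjb : ∀ j ∈ Finset.Icc (-(L:ℤ)) L,
      ‖f j θ₁ * Complex.exp (2 * π * Complex.I * j * θ₁) - f j θ₂ * Complex.exp (2 * π * Complex.I * j * θ₂)‖
      ≤ (2 * s + 1) * (4 * π * (s + L)) * |θ₁ - θ₂| := by
    intro j hj
    rw [hterm j θ₁, hterm j θ₂, ← Finset.sum_sub_distrib]
    refine (norm_sum_le _ _).trans ?_
    have hkb : ∀ k ∈ Finset.Icc (-(s:ℤ)) s,
        ‖c j k * Complex.exp (2 * π * Complex.I * ((k + j : ℤ) : ℂ) * θ₁) - c j k * Complex.exp (2 * π * Complex.I * ((k + j : ℤ) : ℂ) * θ₂)‖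
        ≤ 4 * π * (s + L) * |θ₁ - θ₂| := by
      intro k hk
      rw [← mul_sub, norm_mul]
      have hkj : |(k + j : ℤ)| ≤ (s : ℤ) + L := by
        simp only [Finset.mem_Icc] at hj hk
        rw [abs_le]
        omega
      have hexp : ‖Complex.exp (2 * π * Complex.I * ((k + j : ℤ) : ℂ) * θ₁) - Complex.exp (2 * π * Complex.I * ((k + j : ℤ) : ℂ) * θ₂)‖
          ≤ 4 * π * (s + L) * |θ₁ - θ₂| := by
        rw [SZ_exp_form (k + j) θ₁, SZ_exp_form (k + j) θ₂]
        refine (SZ_exp_lip _ _).trans ?_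
        have : |2 * π * (k + j : ℤ) * θ₁ - 2 * π * (k + j : ℤ) * θ₂| = 2 * π * |(k + j : ℤ)| * |θ₁ - θ₂| := by
          rw [← mul_sub, abs_mul, abs_mul]
          rw [abs_of_pos (by positivity : (0:ℝ) < 2 * π)]
          norm_num [Int.cast_abs]
        rw [this, Int.cast_abs]
        have hcast : (|(k + j : ℤ)| : ℝ) ≤ (s : ℝ) + L := by exact_mod_cast hkj
        have hπ : 0 < π := pi_pos
        have hmul := mul_le_mul_of_nonneg_left
          (mul_le_mul_of_nonneg_right hcast (abs_nonneg (θ₁ - θ₂)))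
          (by positivity : (0:ℝ) ≤ 2 * π)
        nlinarith [hmul]
      calc ‖c j k‖ * ‖Complex.exp (2 * π * Complex.I * ((k + j : ℤ) : ℂ) * θ₁) - Complex.exp (2 * π * Complex.I * ((k + j : ℤ) : ℂ) * θ₂)‖
          ≤ 1 * (4 * π * (s + L) * |θ₁ - θ₂|) := by
            refine mul_le_mul (hc j k hk) hexp (norm_nonneg _) zero_le_one
        _ = 4 * π * (s + L) * |θ₁ - θ₂| := one_mul _
    refine (Finset.sum_le_sum hkb).trans ?_
    rw [Finset.sum_const, SZ_card_Icc, nsmul_eq_mul]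
    push_cast
    ring_nf
    rfl
  refine (Finset.sum_le_sum hjb).trans ?_
  rw [Finset.sum_const, SZ_card_Icc, nsmul_eq_mul]
  push_cast
  ring_nf
  rfl

section Prob

variable {Ω : Type} [MeasureSpace Ω] [IsProbabilityMeasure (ℙ : Measure Ω)]

lemma SZ_integrable_of_bdd {f : Ω → ℝ} (hm : Measurable f) {M : ℝ} (h : ∀ ω, |f ω| ≤ M) :
    Integrable f ℙ :=
  Integrable.mono' (integrable_const M) hm.aestronglyMeasurable (ae_of_all _ h)

lemma SZ_mgf_le {X : Ω → ℝ} (hm : Measurable X) (hb : ∀ ω, |X ω| ≤ 1)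
    (h0 : ∫ ω, X ω = 0) (t : ℝ) : mgf X ℙ t ≤ exp (t ^ 2 / 2) := by
  have hXint : Integrable X ℙ := SZ_integrable_of_bdd hm hb
  have hpt : ∀ ω, exp (t * X ω) ≤ cosh t + sinh t * X ω := by
    intro ω
    have h1 : |X ω| ≤ 1 := hb ω
    have ha : (0:ℝ) ≤ (1 + X ω) / 2 := by cases abs_le.mp h1; linarith
    have hb' : (0:ℝ) ≤ (1 - X ω) / 2 := by cases abs_le.mp h1; linarith
    have hab : (1 + X ω) / 2 + (1 - X ω) / 2 = 1 := by ring
    have := convexOn_exp.2 (Set.mem_univ t) (Set.mem_univ (-t)) ha hb' hab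
    simp only [smul_eq_mul] at this
    have harg : (1 + X ω) / 2 * t + (1 - X ω) / 2 * -t = t * X ω := by ring
    rw [harg] at this
    refine this.trans (le_of_eq ?_)
    rw [Real.cosh_eq, Real.sinh_eq]
    ring
  have hint1 : Integrable (fun ω => exp (t * X ω)) ℙ := by
    refine SZ_integrable_of_bdd ((hm.const_mul t).exp) (M := exp |t|) (fun ω => ?_)
    rw [abs_of_pos (exp_pos _)]
    apply exp_le_exp.mpr
    calc t * X ω ≤ |t * X ω| := le_abs_self _
      _ = |t| * |X ω| := abs_mul _ _
      _ ≤ |t| * 1 := by gcongr; exact hb ω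
      _ = |t| := mul_one _
  have hint2 : Integrable (fun ω => cosh t + sinh t * X ω) ℙ :=
    (integrable_const _).add (hXint.const_mul _)
  calc mgf X ℙ t = ∫ ω, exp (t * X ω) := rfl
    _ ≤ ∫ ω, (cosh t + sinh t * X ω) := integral_mono hint1 hint2 hpt
    _ = cosh t + sinh t * ∫ ω, X ω := by
        rw [integral_add (integrable_const _) (hXint.const_mul _), integral_const,
          integral_const_mul]
        simp
    _ = cosh t := by rw [h0, mul_zero, add_zero]
    _ ≤ exp (t ^ 2 / 2) := cosh_le_exp_half_sq t

lemma SZ_tail (X : ℤ → Ω → ℝ) (F : Finset ℤ) (hF : F.Nonempty)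
    (hmeas : ∀ j, Measurable (X j))
    (hbdd : ∀ j ω, |X j ω| ≤ 1)
    (hindep : iIndepFun X ℙ)
    (hmean : ∀ j, ∫ ω, X j ω = 0)
    (u : ℝ) (hu : 0 ≤ u) :
    ℙ {ω | u ≤ ∑ j ∈ F, X j ω} ≤ ENNReal.ofReal (exp (-u ^ 2 / (2 * F.card))) := by
  have hcard : (0:ℝ) < F.card := by exact_mod_cast Finset.card_pos.mpr hF
  set m : ℝ := (F.card : ℝ)
  set t : ℝ := u / m with ht_def
  have ht : 0 ≤ t := div_nonneg hu hcard.le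
  have hint : ∀ j ∈ F, Integrable (fun ω => exp (t * X j ω)) ℙ := by
    intro j _
    refine SZ_integrable_of_bdd ((hmeas j).const_mul t).exp (M := exp |t|) (fun ω => ?_)
    rw [abs_of_pos (exp_pos _)]
    apply exp_le_exp.mpr
    calc t * X j ω ≤ |t * X j ω| := le_abs_self _
      _ = |t| * |X j ω| := abs_mul _ _
      _ ≤ |t| * 1 := by gcongr; exact hbdd j ω
      _ = |t| := mul_one _
  have hintsum : Integrable (fun ω => exp (t * (∑ j ∈ F, X j) ω)) ℙ :=
    hindep.integrable_exp_mul_sum hmeas hint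
  have hset : {ω | u ≤ ∑ j ∈ F, X j ω} = {ω | u ≤ (∑ j ∈ F, X j) ω} := by
    ext ω; simp [Finset.sum_apply]
  have hchern := measure_ge_le_exp_mul_mgf (X := ∑ j ∈ F, X j) (μ := ℙ) u ht hintsum
  have hmgf : mgf (∑ j ∈ F, X j) ℙ t ≤ exp (m * (t ^ 2 / 2)) := by
    rw [hindep.mgf_sum hmeas F]
    calc ∏ j ∈ F, mgf (X j) ℙ t ≤ ∏ j ∈ F, exp (t ^ 2 / 2) :=
          Finset.prod_le_prod (fun j _ => mgf_nonneg) (fun j _ => SZ_mgf_le (hmeas j) (hbdd j) (hmean j) t)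
      _ = exp (t ^ 2 / 2) ^ F.card := Finset.prod_const _
      _ = exp (m * (t ^ 2 / 2)) := by rw [← Real.exp_nat_mul]
  have hreal : exp (-t * u) * mgf (∑ j ∈ F, X j) ℙ t ≤ exp (-u ^ 2 / (2 * m)) := by
    calc exp (-t * u) * mgf (∑ j ∈ F, X j) ℙ t
        ≤ exp (-t * u) * exp (m * (t ^ 2 / 2)) := by gcongr
      _ = exp (-t * u + m * (t ^ 2 / 2)) := (Real.exp_add _ _).symm
      _ = exp (-u ^ 2 / (2 * m)) := by
          congr 1
          rw [ht_def]
          field_simp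
          ring
  rw [hset]
  rw [ENNReal.le_ofReal_iff_toReal_le (measure_ne_top _ _) (exp_pos _).le]
  exact hchern.trans hreal

lemma SZ_point (L : ℕ) (hL : 0 < L) (a : ℤ → Ω → ℂ)
    (hmeas : ∀ j, Measurable (a j))
    (hbdd : ∀ j ω, ‖a j ω‖ ≤ 1)
    (hindep : iIndepFun a ℙ)
    (hmean : ∀ j, ∫ ω, a j ω = 0)
    (e : ℤ → ℂ) (he : ∀ j, ‖e j‖ = 1)
    (u : ℝ) (hu : 0 ≤ u) :
    ℙ {ω | u ≤ ‖∑ j ∈ Finset.Icc (-(L:ℤ)) L, a j ω * e j‖}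
      ≤ ENNReal.ofReal (4 * exp (-(u / 2) ^ 2 / (2 * (2 * L + 1)))) := by
  set F : Finset ℤ := Finset.Icc (-(L:ℤ)) L with hF_def
  have hFne : F.Nonempty := ⟨0, by simp [hF_def]⟩
  have hcard : (F.card : ℝ) = 2 * L + 1 := by
    rw [hF_def, Int.card_Icc]
    have : ((L:ℤ) + 1 - -(L:ℤ)).toNat = 2 * L + 1 := by omega
    rw [this]
    push_cast
    ring
  -- the four real families
  have hmeasR : ∀ j, Measurable (fun ω => (a j ω * e j).re) := fun j =>
    Complex.measurable_re.comp ((hmeas j).mul_const _)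
  have hmeasI : ∀ j, Measurable (fun ω => (a j ω * e j).im) := fun j =>
    Complex.measurable_im.comp ((hmeas j).mul_const _)
  have hbdd' : ∀ j ω, ‖a j ω * e j‖ ≤ 1 := by
    intro j ω; rw [norm_mul, he j, mul_one]; exact hbdd j ω
  have hbddR : ∀ j ω, |(a j ω * e j).re| ≤ 1 := fun j ω =>
    (Complex.abs_re_le_norm _).trans (hbdd' j ω)
  have hbddI : ∀ j ω, |(a j ω * e j).im| ≤ 1 := fun j ω =>
    (Complex.abs_im_le_norm _).trans (hbdd' j ω)
  have hintC : ∀ j, Integrable (fun ω => a j ω * e j) ℙ := by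
    intro j
    exact Integrable.mono' (integrable_const 1)
      ((hmeas j).mul_const _).aestronglyMeasurable (ae_of_all _ (hbdd' j))
  have hmeanC : ∀ j, ∫ ω, a j ω * e j = 0 := by
    intro j
    rw [integral_mul_const, hmean j, zero_mul]
  have hmeanR : ∀ j, ∫ ω, (a j ω * e j).re = 0 := by
    intro j
    have := integral_re (hintC j) (f := fun ω => a j ω * e j)
    simp only [RCLike.re_to_complex] at this
    rw [this, hmeanC j]
    simp
  have hmeanI : ∀ j, ∫ ω, (a j ω * e j).im = 0 := by
    intro j
    have := integral_im (hintC j) (f := fun ω => a j ω * e j)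
    simp only [RCLike.im_to_complex] at this
    rw [this, hmeanC j]
    simp
  have hindepR : iIndepFun (fun j ω => (a j ω * e j).re) ℙ :=
    hindep.comp (fun j z => (z * e j).re)
      (fun j => Complex.measurable_re.comp (measurable_mul_const _))
  have hindepI : iIndepFun (fun j ω => (a j ω * e j).im) ℙ :=
    hindep.comp (fun j z => (z * e j).im)
      (fun j => Complex.measurable_im.comp (measurable_mul_const _))
  have hindepRn : iIndepFun (fun j ω => -(a j ω * e j).re) ℙ :=
    hindep.comp (fun j z => -(z * e j).re)
      (fun j => (Complex.measurable_re.comp (measurable_mul_const _)).neg)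
  have hindepIn : iIndepFun (fun j ω => -(a j ω * e j).im) ℙ :=
    hindep.comp (fun j z => -(z * e j).im)
      (fun j => (Complex.measurable_im.comp (measurable_mul_const _)).neg)
  have hu2 : 0 ≤ u / 2 := by linarith
  set r : ℝ := exp (-(u / 2) ^ 2 / (2 * (2 * L + 1))) with hr_def
  have hbound : ∀ (X : ℤ → Ω → ℝ), (∀ j, Measurable (X j)) → (∀ j ω, |X j ω| ≤ 1) →
      iIndepFun X ℙ → (∀ j, ∫ ω, X j ω = 0) →
      ℙ {ω | u / 2 ≤ ∑ j ∈ F, X j ω} ≤ ENNReal.ofReal r := by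
    intro X h1 h2 h3 h4
    have := SZ_tail X F hFne h1 h2 h3 h4 (u / 2) hu2
    rwa [hcard] at this
  -- inclusion
  have hincl : {ω | u ≤ ‖∑ j ∈ F, a j ω * e j‖} ⊆
      {ω | u / 2 ≤ ∑ j ∈ F, (a j ω * e j).re} ∪ {ω | u / 2 ≤ ∑ j ∈ F, -(a j ω * e j).re} ∪
      ({ω | u / 2 ≤ ∑ j ∈ F, (a j ω * e j).im} ∪ {ω | u / 2 ≤ ∑ j ∈ F, -(a j ω * e j).im}) := by
    intro ω hω
    simp only [Set.mem_setOf_eq] at hω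
    set z : ℂ := ∑ j ∈ F, a j ω * e j with hz
    have hre : z.re = ∑ j ∈ F, (a j ω * e j).re := by
      rw [hz, Complex.re_sum]
    have him : z.im = ∑ j ∈ F, (a j ω * e j).im := by
      rw [hz, Complex.im_sum]
    have habs : ‖z‖ ≤ |z.re| + |z.im| := Complex.norm_le_abs_re_add_abs_im _
    have : u / 2 ≤ |z.re| ∨ u / 2 ≤ |z.im| := by
      by_contra h
      push_neg at h
      have := hω.trans habs
      linarith [h.1, h.2]
    rcases this with h | h
    · rcases le_abs.mp h with h' | h'
      · exact Or.inl (Or.inl (by rw [Set.mem_setOf_eq, ← hre]; exact h'))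
      · refine Or.inl (Or.inr ?_)
        rw [Set.mem_setOf_eq, Finset.sum_neg_distrib, ← hre]
        exact h'
    · rcases le_abs.mp h with h' | h'
      · exact Or.inr (Or.inl (by rw [Set.mem_setOf_eq, ← him]; exact h'))
      · refine Or.inr (Or.inr ?_)
        rw [Set.mem_setOf_eq, Finset.sum_neg_distrib, ← him]
        exact h'
  have hmeanRn : ∀ j, ∫ ω, -(a j ω * e j).re = 0 := by
    intro j; rw [integral_neg, hmeanR j, neg_zero]
  have hmeanIn : ∀ j, ∫ ω, -(a j ω * e j).im = 0 := by
    intro j; rw [integral_neg, hmeanI j, neg_zero]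
  have hbddRn : ∀ j ω, |-(a j ω * e j).re| ≤ 1 := by
    intro j ω; rw [abs_neg]; exact hbddR j ω
  have hbddIn : ∀ j ω, |-(a j ω * e j).im| ≤ 1 := by
    intro j ω; rw [abs_neg]; exact hbddI j ω
  calc ℙ {ω | u ≤ ‖∑ j ∈ F, a j ω * e j‖}
      ≤ ℙ ({ω | u / 2 ≤ ∑ j ∈ F, (a j ω * e j).re} ∪ {ω | u / 2 ≤ ∑ j ∈ F, -(a j ω * e j).re} ∪
        ({ω | u / 2 ≤ ∑ j ∈ F, (a j ω * e j).im} ∪ {ω | u / 2 ≤ ∑ j ∈ F, -(a j ω * e j).im})) :=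
        measure_mono hincl
    _ ≤ ℙ ({ω | u / 2 ≤ ∑ j ∈ F, (a j ω * e j).re} ∪ {ω | u / 2 ≤ ∑ j ∈ F, -(a j ω * e j).re}) +
        ℙ ({ω | u / 2 ≤ ∑ j ∈ F, (a j ω * e j).im} ∪ {ω | u / 2 ≤ ∑ j ∈ F, -(a j ω * e j).im}) :=
        measure_union_le _ _
    _ ≤ (ℙ {ω | u / 2 ≤ ∑ j ∈ F, (a j ω * e j).re} + ℙ {ω | u / 2 ≤ ∑ j ∈ F, -(a j ω * e j).re}) +
        (ℙ {ω | u / 2 ≤ ∑ j ∈ F, (a j ω * e j).im} + ℙ {ω | u / 2 ≤ ∑ j ∈ F, -(a j ω * e j).im}) :=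
        add_le_add (measure_union_le _ _) (measure_union_le _ _)
    _ ≤ (ENNReal.ofReal r + ENNReal.ofReal r) + (ENNReal.ofReal r + ENNReal.ofReal r) := by
        gcongr
        · exact hbound _ hmeasR hbddR hindepR hmeanR
        · exact hbound _ (fun j => (hmeasR j).neg) hbddRn hindepRn hmeanRn
        · exact hbound _ hmeasI hbddI hindepI hmeanI
        · exact hbound _ (fun j => (hmeasI j).neg) hbddIn hindepIn hmeanIn
    _ = ENNReal.ofReal (4 * r) := by
        have hr0 : 0 ≤ r := by rw [hr_def]; positivity
        have h2 : ENNReal.ofReal r + ENNReal.ofReal r = ENNReal.ofReal (2 * r) := by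
          rw [← ENNReal.ofReal_add hr0 hr0]; congr 1; ring
        rw [h2, ← ENNReal.ofReal_add (by linarith) (by linarith)]
        congr 1
        ring

end Prob

set_option maxHeartbeats 2000000 in
theorem salem_zygmund_random_coefficients (A : ℝ) (hA : 1 < A) :
    ∃ C : ℝ, 0 < C ∧
      ∀ (s L : ℕ), 0 < s → 0 < L →
      ∀ (Ω : Type) [MeasureSpace Ω] [IsProbabilityMeasure (ℙ : Measure Ω)]
        (a : ℤ → Ω → ℝ → ℂ),
        (∀ j θ, Measurable (fun ω => a j ω θ)) →
        (∀ j ω, ∃ c : ℤ → ℂ, ∀ θ : ℝ,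
          a j ω θ = ∑ k ∈ Finset.Icc (-(s:ℤ)) s, c k * Complex.exp (2 * π * Complex.I * k * θ)) →
        (∀ j ω θ, ‖a j ω θ‖ ≤ 1) →
        (∀ θ : ℝ, iIndepFun (fun j ω => a j ω θ) ℙ) →
        (∀ j θ, ∫ ω, a j ω θ = 0) →
        ℙ {ω | ∃ θ : ℝ,
            C * Real.sqrt (Real.log (s + L)) * Real.sqrt L <
              ‖∑ j ∈ Finset.Icc (-(L:ℤ)) L,
                a j ω θ * Complex.exp (2 * π * Complex.I * j * θ)‖} ≤
          ENNReal.ofReal (((s : ℝ) + L) ^ (-A)) := by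
  have hC0 : 0 < Real.sqrt (96 * (A + 13)) := Real.sqrt_pos.mpr (by linarith)
  refine ⟨Real.sqrt (96 * (A + 13)), hC0, ?_⟩
  intro s L hs hL Ω _ _ a hmeas hpoly hbdd hindep hmean
  set C : ℝ := Real.sqrt (96 * (A + 13)) with hC_def
  have hCsq : C ^ 2 = 96 * (A + 13) := Real.sq_sqrt (by linarith)
  have hC3 : 3 ≤ C := by
    rw [hC_def, show (3:ℝ) = Real.sqrt 9 by rw [show (9:ℝ) = 3 ^ 2 by norm_num, Real.sqrt_sq (by norm_num)]]
    exact Real.sqrt_le_sqrt (by nlinarith)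
  choose c hc using hpoly
  have hcb : ∀ j ω, ∀ k ∈ Finset.Icc (-(s:ℤ)) s, ‖c j ω k‖ ≤ 1 :=
    fun j ω => SZ_coeff_bound s (a j ω) (c j ω) (hc j ω) (hbdd j ω)
  set nR : ℝ := (s : ℝ) + (L : ℝ) with hnR_def
  have hs1 : (1:ℝ) ≤ s := by exact_mod_cast hs
  have hL1 : (1:ℝ) ≤ L := by exact_mod_cast hL
  have hnR2 : (2:ℝ) ≤ nR := by rw [hnR_def]; linarith
  have hnR0 : (0:ℝ) < nR := by linarith
  have hlog2 : Real.log 2 ≤ Real.log nR := Real.log_le_log (by norm_num) hnR2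
  have hlogpos : 0 < Real.log nR := lt_of_lt_of_le (Real.log_pos (by norm_num)) hlog2
  set u : ℝ := C * Real.sqrt (Real.log nR) * Real.sqrt (L : ℝ) with hu_def
  have hsqL1 : (1:ℝ) ≤ Real.sqrt (L:ℝ) := by
    rw [show (1:ℝ) = Real.sqrt 1 by rw [Real.sqrt_one]]
    exact Real.sqrt_le_sqrt hL1
  have hsqlog : (2/3 : ℝ) ≤ Real.sqrt (Real.log nR) := by
    rw [show (2/3 : ℝ) = Real.sqrt ((2/3)^2) by rw [Real.sqrt_sq (by norm_num)]]
    apply Real.sqrt_le_sqrt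
    have : (0.6931471803 : ℝ) < Real.log 2 := Real.log_two_gt_d9
    nlinarith
  have hu2 : 2 ≤ u := by
    rw [hu_def]
    calc (2:ℝ) = 3 * (2/3) * 1 := by norm_num
      _ ≤ C * Real.sqrt (Real.log nR) * Real.sqrt (L:ℝ) := by
          apply mul_le_mul _ hsqL1 (by norm_num) (by positivity)
          apply mul_le_mul hC3 hsqlog (by norm_num) (by linarith)
  have hu0 : (0:ℝ) ≤ u := by linarith
  set N : ℕ := 114 * (s + L) ^ 4 with hN_def
  have hN0 : 0 < N := by positivity
  have hNR : (N : ℝ) = 114 * nR ^ 4 := by rw [hN_def, hnR_def]; push_cast; ring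
  set K : ℝ := (2 * L + 1) * ((2 * s + 1) * (4 * π * (s + L))) with hK_def
  have hKle : K ≤ (N : ℝ) := by
    rw [hK_def, hNR]
    have hπ4 : π ≤ 4 := by linarith [pi_le_four]
    have hπ0 : 0 < π := pi_pos
    have h1 : (2 * (L:ℝ) + 1) ≤ 2 * nR := by rw [hnR_def]; linarith
    have h2 : (2 * (s:ℝ) + 1) ≤ 2 * nR := by rw [hnR_def]; linarith
    have h3 : ((s:ℝ) + L) = nR := by rw [hnR_def]
    rw [h3]
    have hnR1 : (1:ℝ) ≤ nR := by linarith
    calc (2 * (L:ℝ) + 1) * ((2 * (s:ℝ) + 1) * (4 * π * nR))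
        ≤ (2 * nR) * ((2 * nR) * (4 * 4 * nR)) := by gcongr
      _ = 64 * nR ^ 3 := by ring
      _ ≤ 114 * nR ^ 4 := by nlinarith [pow_le_pow_right₀ hnR1 (by norm_num : 3 ≤ 4), pow_nonneg (by linarith : (0:ℝ) ≤ nR) 4]
  set θi : ℕ → ℝ := fun i => (i:ℝ)/(N:ℝ) with hθi_def
  -- covering
  have hcov : {ω | ∃ θ : ℝ, u < ‖∑ j ∈ Finset.Icc (-(L:ℤ)) L, a j ω θ * Complex.exp (2 * π * Complex.I * j * θ)‖}
      ⊆ ⋃ i ∈ Finset.range N, {ω | u / 2 ≤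
          ‖∑ j ∈ Finset.Icc (-(L:ℤ)) L, a j ω (θi i) * Complex.exp (2 * π * Complex.I * j * (θi i))‖} := by
    intro ω hω
    obtain ⟨θ, hθ⟩ := hω
    have hper := SZ_T_per s L (fun j t => a j ω t) (fun j k => c j ω k) (fun j t => hc j ω t) θ
    rw [hper] at hθ
    set θ' : ℝ := Int.fract θ with hθ'_def
    have hfr0 : 0 ≤ θ' := Int.fract_nonneg θ
    have hfr1 : θ' < 1 := Int.fract_lt_one θ
    set m : ℤ := ⌊(N:ℝ) * θ'⌋ with hm_def
    have hm0 : 0 ≤ m := Int.floor_nonneg.mpr (by positivity)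
    set i : ℕ := m.toNat with hi_def
    have him : (i : ℝ) = (m : ℝ) := by rw [hi_def]; exact_mod_cast Int.toNat_of_nonneg hm0
    have hNpos : (0:ℝ) < N := by exact_mod_cast hN0
    have hmle : (m : ℝ) ≤ (N:ℝ) * θ' := Int.floor_le _
    have hmgt : (N:ℝ) * θ' < (m : ℝ) + 1 := Int.lt_floor_add_one _
    have hiN : i < N := by
      have : (m : ℝ) < (N : ℝ) := lt_of_le_of_lt hmle (by nlinarith)
      have hm : m < (N : ℤ) := by exact_mod_cast this
      omega
    have hclose : |θ' - θi i| ≤ 1 / (N:ℝ) := by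
      rw [hθi_def]
      simp only
      have h1' : (i:ℝ)/(N:ℝ) ≤ θ' := by rw [him, div_le_iff₀ hNpos, mul_comm]; exact hmle
      have h2' : θ' ≤ ((i:ℝ)+1)/(N:ℝ) := by rw [him, le_div_iff₀ hNpos, mul_comm]; linarith
      have h3 : (0:ℝ) < 1/(N:ℝ) := by positivity
      rw [abs_le]
      constructor
      · linarith
      · have h4 := sub_le_sub_right h2' ((i:ℝ)/(N:ℝ))
        calc θ' - (i:ℝ)/(N:ℝ) ≤ ((i:ℝ)+1)/(N:ℝ) - (i:ℝ)/(N:ℝ) := h4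
          _ = 1/(N:ℝ) := by ring
    have hlip := SZ_T_lip s L (fun j t => a j ω t) (fun j k => c j ω k) (fun j t => hc j ω t)
      (fun j => hcb j ω) θ' (θi i)
    have hdist : ‖(∑ j ∈ Finset.Icc (-(L:ℤ)) L, a j ω θ' * Complex.exp (2 * π * Complex.I * j * θ')) -
        (∑ j ∈ Finset.Icc (-(L:ℤ)) L, a j ω (θi i) * Complex.exp (2 * π * Complex.I * j * (θi i)))‖ ≤ 1 := by
      refine hlip.trans ?_
      calc (2 * (L:ℝ) + 1) * ((2 * s + 1) * (4 * π * (s + L))) * |θ' - θi i|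
          ≤ (N:ℝ) * (1 / (N:ℝ)) := by
            apply mul_le_mul hKle hclose (abs_nonneg _) (by positivity)
        _ = 1 := by field_simp
    refine Set.mem_biUnion (Finset.mem_range.mpr hiN) ?_
    simp only [Set.mem_setOf_eq]
    have h := norm_sub_norm_le _ _ |>.trans hdist
    have := hθ
    -- ‖Tθ'‖ - ‖T(i/N)‖ ≤ 1, u < ‖Tθ'‖  ⇒ u - 1 < ‖T(i/N)‖  and u/2 ≤ u - 1
    linarith [h, hθ]
  -- pointwise exponential bound at each net point
  set r : ℝ := 4 * exp (-(u / 2 / 2) ^ 2 / (2 * (2 * L + 1))) with hr_def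
  have hpt : ∀ i : ℕ, ℙ {ω | u / 2 ≤
      ‖∑ j ∈ Finset.Icc (-(L:ℤ)) L, a j ω (θi i) * Complex.exp (2 * π * Complex.I * j * (θi i))‖}
      ≤ ENNReal.ofReal r := by
    intro i
    have he' : ∀ j : ℤ, ‖Complex.exp (2 * π * Complex.I * j * ((θi i : ℝ) : ℂ))‖ = 1 := by
      intro j
      rw [SZ_exp_form j (θi i), SZ_norm_exp]
    exact SZ_point L hL (fun j ω => a j ω (θi i)) (fun j => hmeas j (θi i))
      (fun j ω => hbdd j ω (θi i)) (hindep (θi i)) (fun j => hmean j (θi i))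
      (fun j => Complex.exp (2 * π * Complex.I * j * (θi i))) he' (u / 2) (by linarith)
  -- final arithmetic
  have hexps : exp (-(u / 2 / 2) ^ 2 / (2 * (2 * L + 1))) ≤ nR ^ (-(A + 13)) := by
    have husq : u ^ 2 = C ^ 2 * (Real.log nR * L) := by
      rw [hu_def, mul_pow, mul_pow, Real.sq_sqrt hlogpos.le, Real.sq_sqrt (by positivity : (0:ℝ) ≤ (L:ℝ))]
      ring
    have key : (A + 13) * Real.log nR ≤ ((u / 2 / 2) ^ 2) / (2 * (2 * (L:ℝ) + 1)) := by
      rw [le_div_iff₀ (by positivity)]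
      have h16 : (u / 2 / 2) ^ 2 = 6 * (A + 13) * Real.log nR * L := by
        have : (u / 2 / 2) ^ 2 = u ^ 2 / 16 := by ring
        rw [this, husq, hCsq]; ring
      rw [h16]
      nlinarith [mul_nonneg (mul_nonneg (by linarith : (0:ℝ) ≤ A + 13) hlogpos.le)
        (by linarith : (0:ℝ) ≤ 6 * (L:ℝ) - (4 * L + 2))]
    have : nR ^ (-(A + 13)) = exp (-((A + 13) * Real.log nR)) := by
      rw [Real.rpow_def_of_pos hnR0]
      ring_nf
    rw [this]
    apply exp_le_exp.mpr
    rw [neg_div]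
    exact neg_le_neg key
  have hfinal : (N : ℝ) * r ≤ nR ^ (-A) := by
    have h456 : (456 : ℝ) ≤ nR ^ (9:ℕ) :=
      le_trans (by norm_num : (456:ℝ) ≤ 2 ^ 9) (pow_le_pow_left₀ (by norm_num) hnR2 9)
    have hr0 : 0 ≤ r := by rw [hr_def]; positivity
    calc (N : ℝ) * r = 456 * nR ^ (4:ℕ) * exp (-(u / 2 / 2) ^ 2 / (2 * (2 * L + 1))) := by
          rw [hNR, hr_def]; ring
      _ ≤ nR ^ (9:ℕ) * nR ^ (4:ℕ) * nR ^ (-(A + 13)) := by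
          have hp4 : (0:ℝ) ≤ nR ^ (4:ℕ) := by positivity
          have hexp0 : (0:ℝ) ≤ exp (-(u / 2 / 2) ^ 2 / (2 * (2 * L + 1))) := (exp_pos _).le
          apply mul_le_mul
          · exact mul_le_mul_of_nonneg_right h456 hp4
          · exact hexps
          · exact hexp0
          · positivity
      _ = nR ^ ((13:ℕ):ℝ) * nR ^ (-(A + 13)) := by
          rw [← pow_add, Real.rpow_natCast]
      _ = nR ^ (((13:ℕ):ℝ) + -(A + 13)) := (Real.rpow_add hnR0 _ _).symm
      _ = nR ^ (-A) := by norm_num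
  calc ℙ {ω | ∃ θ : ℝ, u < ‖∑ j ∈ Finset.Icc (-(L:ℤ)) L, a j ω θ * Complex.exp (2 * π * Complex.I * j * θ)‖}
      ≤ ℙ (⋃ i ∈ Finset.range N, {ω | u / 2 ≤
          ‖∑ j ∈ Finset.Icc (-(L:ℤ)) L, a j ω (θi i) * Complex.exp (2 * π * Complex.I * j * (θi i))‖}) :=
        measure_mono hcov
    _ ≤ ∑ i ∈ Finset.range N, ℙ {ω | u / 2 ≤
          ‖∑ j ∈ Finset.Icc (-(L:ℤ)) L, a j ω (θi i) * Complex.exp (2 * π * Complex.I * j * (θi i))‖} :=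
        measure_biUnion_finset_le _ _
    _ ≤ ∑ i ∈ Finset.range N, ENNReal.ofReal r := Finset.sum_le_sum (fun i _ => hpt i)
    _ = (N : ENNReal) * ENNReal.ofReal r := by
        rw [Finset.sum_const, Finset.card_range, nsmul_eq_mul]
    _ = ENNReal.ofReal ((N : ℝ) * r) := by
        rw [← ENNReal.ofReal_natCast N, ← ENNReal.ofReal_mul (by positivity)]
    _ ≤ ENNReal.ofReal (nR ^ (-A)) := ENNReal.ofReal_le_ofReal hfinal
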